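/- arXiv:0710.4862 — 4 statements merged into one kernel-verified Lean document; each statement's English description precedes it below -/
import Mathlib

section
/- Let r ∈ ℕ, let (X, B, μ, T) be a measure preserving dynamical system, and let (B_α)_{α≥1} be an increasing sequence of T-invariant sub-σ-algebras of B such that the σ-algebra generated by ⋃_{α≥1} B_α is B. Then for every B ∈ B there exist α ≥ 1 and B' ∈ B_α such that μ(B') ≥ μ(B)/2 and, for all n₁,…,n_r ∈ ℤ, μ(B ∩ T^{−n₁}B ∩ … ∩ T^{−n_r}B) ≥ (1/2) μ(B' ∩ T^{−n₁}B' ∩ … ∩ T^{−n_r}B'). -/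
open MeasureTheory Filter
open scoped ENNReal NNReal

/-- The ℤ-power of an invertible transformation `T` with inverse `S`. -/
def zpowIter {X : Type*} (T S : X → X) : ℤ → X → X
  | Int.ofNat k => T^[k]
  | Int.negSucc k => S^[k + 1]

section Aux
variable {X : Type*} [m0 : MeasurableSpace X] {μ : Measure X}

lemma zpowIter_mp {T S : X → X} (hT : MeasurePreserving T μ μ)
    (hS : MeasurePreserving S μ μ) (n : ℤ) : MeasurePreserving (zpowIter T S n) μ μ := by
  cases n with
  | ofNat k => exact hT.iterate k
  | negSucc k => exact hS.iterate (k + 1)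

lemma comap_iterate {m : MeasurableSpace X} {f : X → X} (hf : m.comap f = m) (k : ℕ) :
    m.comap f^[k] = m := by
  induction k with
  | zero => simpa using MeasurableSpace.comap_id
  | succ k ih =>
      rw [Function.iterate_succ', ← MeasurableSpace.comap_comp, hf, ih]

lemma zpowIter_comap {m : MeasurableSpace X} {T S : X → X}
    (hTS : Function.RightInverse S T) (hm : m.comap T = m) (n : ℤ) :
    m.comap (zpowIter T S n) = m := by
  have hS : m.comap S = m := by
    conv_lhs => rw [← hm]
    rw [MeasurableSpace.comap_comp, show T ∘ S = id from funext hTS,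
      MeasurableSpace.comap_id]
  cases n with
  | ofNat k => exact comap_iterate hm k
  | negSucc k => exact comap_iterate hS (k + 1)

end Aux

lemma condexp_comp_mp {X : Type*} {m : MeasurableSpace X} [m0 : MeasurableSpace X]
    {μ : Measure X} [IsFiniteMeasure μ] (hm : m ≤ m0)
    {U : X → X} (hU : MeasurePreserving U μ μ) (hUm : m.comap U = m)
    {g : X → ℝ} (hg : Integrable g μ) :
    (μ[g|m]) ∘ U =ᵐ[μ] μ[g ∘ U|m] := by
  have hUmeas : Measurable U := hU.measurable
  have hsetint : ∀ (t : Set X), MeasurableSet[m] t → ∀ h : X → ℝ,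
      AEStronglyMeasurable h μ →
      ∫ x in U ⁻¹' t, (h ∘ U) x ∂μ = ∫ x in t, h x ∂μ := by
    intro t ht h hh
    have := setIntegral_map (μ := μ) (g := U) (f := h) (hm t ht)
      (by rwa [hU.map_eq]) hUmeas.aemeasurable
    rw [hU.map_eq] at this
    exact this.symm
  refine ae_eq_condExp_of_forall_setIntegral_eq hm
    ((hU.integrable_comp hg.aestronglyMeasurable).mpr hg) ?_ ?_ ?_
  · intro s _ _
    exact ((hU.integrable_comp
      ((stronglyMeasurable_condExp.mono hm).aestronglyMeasurable)).mpr
      integrable_condExp).integrableOn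
  · intro s hs _
    obtain ⟨t, ht, rfl⟩ := MeasurableSpace.measurableSet_comap.mp (hUm ▸ hs)
    rw [hsetint t ht _ (stronglyMeasurable_condExp.mono hm).aestronglyMeasurable,
      hsetint t ht g hg.aestronglyMeasurable, setIntegral_condExp hm hg ht]
  · exact StronglyMeasurable.aestronglyMeasurable
      (stronglyMeasurable_condExp.comp_measurable (Measurable.of_comap_le hUm.le))

/-- Let `(X, B, μ, T)` be an invertible probability measure preserving
system and `(B_α)` an increasing sequence of `T`-invariant sub-σ-algebras generating `B`.
Then for every measurable `B` there are `α` and `B' ∈ B_α` with `μ(B') ≥ μ(B)/2` and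
`μ(B ∩ T^{-n₁}B ∩ … ∩ T^{-n_r}B) ≥ (1/2) μ(B' ∩ T^{-n₁}B' ∩ … ∩ T^{-n_r}B')`
for all `n₁, …, n_r ∈ ℤ`. -/
theorem approx_by_sub_sigma_algebra {X : Type*} [m0 : MeasurableSpace X]
    (μ : Measure X) [IsProbabilityMeasure μ]
    (T S : X → X) (hT : MeasurePreserving T μ μ) (hS : MeasurePreserving S μ μ)
    (hST : Function.LeftInverse S T) (hTS : Function.RightInverse S T)
    (r : ℕ) (B : ℕ → MeasurableSpace X)
    (hle : ∀ α, B α ≤ m0) (hmono : Monotone B)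
    (hinvariant : ∀ α, MeasurableSpace.comap T (B α) = B α)
    (hgen : (⨆ α, B α) = m0)
    (A : Set X) (hA : MeasurableSet A) :
    ∃ (α : ℕ) (A' : Set X), MeasurableSet[B α] A' ∧ μ A / 2 ≤ μ A' ∧
      ∀ n : Fin r → ℤ,
        μ (A' ∩ ⋂ i, zpowIter T S (n i) ⁻¹' A') ≤
          2 * μ (A ∩ ⋂ i, zpowIter T S (n i) ⁻¹' A) := by
  classical
  set g : X → ℝ := A.indicator fun _ => (1 : ℝ) with hg_def
  have hgint : Integrable g μ := (integrable_const (1 : ℝ)).indicator hA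
  have hg01 : ∀ y, 0 ≤ g y ∧ g y ≤ 1 := by
    intro y
    by_cases h : y ∈ A <;> simp [hg_def, Set.indicator_apply, h]
  by_cases hA0 : μ A = 0
  · exact ⟨0, ∅, @MeasurableSet.empty X (B 0), by simp [hA0], fun n => by simp⟩
  -- martingale convergence: choose α
  set ℱ : Filtration ℕ m0 := ⟨B, hmono, hle⟩ with hℱ
  have hgmeas : StronglyMeasurable[⨆ α, ℱ α] g := by
    have : (⨆ α, ℱ α) = m0 := hgen
    rw [this]
    exact stronglyMeasurable_const.indicator hA
  have htend := hgint.tendsto_eLpNorm_condExp hgmeas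
  set η : ℝ := 1 / (2 * (r + 1)) with hη
  have hηpos : 0 < η := by positivity
  set ηe : ℝ≥0∞ := ENNReal.ofReal η with hηe
  have hηe0 : ηe ≠ 0 := by
    simp [hηe, ENNReal.ofReal_eq_zero, not_le, hηpos]
  have hηetop : ηe ≠ ⊤ := ENNReal.ofReal_ne_top
  have hAfin : μ A ≠ ⊤ := measure_ne_top μ A
  have hεpos : (0 : ℝ≥0∞) < ηe * (μ A / 2) := by
    refine ENNReal.mul_pos hηe0 ?_
    simp [ENNReal.div_eq_zero_iff, hA0]
  obtain ⟨α, hα⟩ := (htend.eventually (gt_mem_nhds hεpos)).exists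
  have hmle : B α ≤ m0 := hle α
  set f : X → ℝ := μ[g|B α] with hf_def
  have hα' : eLpNorm (f - g) 1 μ < ηe * (μ A / 2) := hα
  have hfmeas : StronglyMeasurable[B α] f := stronglyMeasurable_condExp
  set A' : Set X := f ⁻¹' Set.Ici (1 - η) with hA'_def
  have hA'mα : MeasurableSet[B α] A' := hfmeas.measurable measurableSet_Ici
  have hA'm0 : MeasurableSet A' := hmle _ hA'mα
  refine ⟨α, A', hA'mα, ?_, ?_⟩
  · -- measure bound
    have hsub : A \ A' ⊆ {x | ηe ≤ (‖f x - g x‖₊ : ℝ≥0∞)} := by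
      intro x ⟨hxA, hxA'⟩
      have hgx : g x = 1 := Set.indicator_of_mem hxA _
      have hfx : f x < 1 - η := by
        have h := hxA'
        simp only [hA'_def, Set.mem_preimage, Set.mem_Ici, not_le] at h
        exact h
      have habs : η ≤ |f x - g x| := by
        rw [abs_sub_comm, hgx]
        calc η ≤ 1 - f x := by linarith
        _ ≤ |1 - f x| := le_abs_self _
      show ηe ≤ (‖f x - g x‖₊ : ℝ≥0∞)
      rw [← enorm_eq_nnnorm, Real.enorm_eq_ofReal_abs]
      exact ENNReal.ofReal_le_ofReal habs
    have hmarkov : ηe * μ {x | ηe ≤ (‖f x - g x‖₊ : ℝ≥0∞)} ≤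
        ∫⁻ x, (‖f x - g x‖₊ : ℝ≥0∞) ∂μ := by
      refine mul_meas_ge_le_lintegral₀ ?_ ηe
      exact ((hfmeas.mono hmle).aestronglyMeasurable.sub
        hgint.aestronglyMeasurable).enorm
    have hel : ∫⁻ x, (‖f x - g x‖₊ : ℝ≥0∞) ∂μ = eLpNorm (f - g) 1 μ := by
      rw [eLpNorm_one_eq_lintegral_enorm]
      simp [Pi.sub_apply]
      rfl
    have hbadlt : μ {x | ηe ≤ (‖f x - g x‖₊ : ℝ≥0∞)} < μ A / 2 := by
      have h1 : ηe * μ {x | ηe ≤ (‖f x - g x‖₊ : ℝ≥0∞)} < ηe * (μ A / 2) :=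
        lt_of_le_of_lt (hel ▸ hmarkov) hα'
      exact (ENNReal.mul_lt_mul_iff_right hηe0 hηetop).mp h1
    have hdiff : μ (A \ A') < μ A / 2 := lt_of_le_of_lt (measure_mono hsub) hbadlt
    have h2 : μ A ≤ μ A' + μ A / 2 := by
      calc μ A ≤ μ (A ∩ A') + μ (A \ A') := measure_le_inter_add_diff μ A A'
      _ ≤ μ A' + μ A / 2 :=
        add_le_add (measure_mono Set.inter_subset_right) hdiff.le
    have h3 : μ A / 2 + μ A / 2 ≤ μ A' + μ A / 2 := by
      rwa [ENNReal.add_halves]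
    exact (ENNReal.add_le_add_iff_right
      (ENNReal.div_lt_top hAfin (by norm_num)).ne).mp h3
  · -- main inequality
    intro n
    set U : Fin r → X → X := fun i => zpowIter T S (n i) with hU_def
    have hUmp : ∀ i, MeasurePreserving (U i) μ μ := fun i => zpowIter_mp hT hS (n i)
    have hUcomap : ∀ i, (B α).comap (U i) = B α :=
      fun i => zpowIter_comap hTS (hinvariant α) (n i)
    set K : Set X := ⋂ i, U i ⁻¹' A with hK_def
    set K' : Set X := ⋂ i, U i ⁻¹' A' with hK'_def
    have hAKm : MeasurableSet (A ∩ K) :=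
      hA.inter (MeasurableSet.iInter fun i => (hUmp i).measurable hA)
    have hs'α : MeasurableSet[B α] (A' ∩ K') := by
      refine hA'mα.inter (MeasurableSet.iInter fun i => ?_)
      exact (hUcomap i) ▸ MeasurableSpace.measurableSet_comap.mpr ⟨A', hA'mα, rfl⟩
    have hs'0 : MeasurableSet (A' ∩ K') := hmle _ hs'α
    set χ : X → ℝ := (A ∩ K).indicator fun _ => (1 : ℝ) with hχ_def
    have hχint : Integrable χ μ := (integrable_const (1 : ℝ)).indicator hAKm
    have hcomp_int : ∀ i, Integrable (g ∘ U i) μ := fun i =>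
      ((hUmp i).integrable_comp hgint.aestronglyMeasurable).mpr hgint
    set F : X → ℝ := (g + ∑ i, g ∘ U i) - fun _ => (r : ℝ) with hF_def
    have hsum_int : Integrable (∑ i, g ∘ U i) μ :=
      (integrable_finset_sum Finset.univ fun i _ => hcomp_int i).congr
        (Filter.Eventually.of_forall fun x => (Finset.sum_apply _ _ _).symm)
    have hFint : Integrable F μ :=
      ((hgint.add hsum_int).sub (integrable_const _))
    have hbound : ∀ x, F x ≤ χ x := by
      intro x
      have hFx : F x = g x + (∑ i, g (U i x)) - r := by
        simp [hF_def, Finset.sum_apply]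
      by_cases hx : x ∈ A ∩ K
      · have hχx : χ x = 1 := Set.indicator_of_mem hx _
        have hsum : (∑ i, g (U i x)) ≤ r := by
          calc (∑ i, g (U i x)) ≤ ∑ _i : Fin r, (1 : ℝ) :=
            Finset.sum_le_sum fun i _ => (hg01 _).2
          _ = r := by simp
        rw [hχx, hFx]; linarith [(hg01 x).2]
      · have hχx : χ x = 0 := Set.indicator_of_notMem hx _
        rw [hχx, hFx]
        by_cases hxA : x ∈ A
        · have hxK : x ∉ K := fun h => hx ⟨hxA, h⟩
          obtain ⟨j, hj⟩ : ∃ j, U j x ∉ A := by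
            by_contra h
            push_neg at h
            exact hxK (Set.mem_iInter.2 fun i => h i)
          have hgj : g (U j x) = 0 := Set.indicator_of_notMem hj _
          have hsplit : (∑ i, g (U i x)) =
              g (U j x) + ∑ i ∈ Finset.univ.erase j, g (U i x) :=
            (Finset.add_sum_erase _ _ (Finset.mem_univ j)).symm
          have herase : (∑ i ∈ Finset.univ.erase j, g (U i x)) ≤
              ((Finset.univ.erase j).card : ℝ) := by
            calc (∑ i ∈ Finset.univ.erase j, g (U i x)) ≤
                ∑ _i ∈ Finset.univ.erase j, (1 : ℝ) :=
              Finset.sum_le_sum fun i _ => (hg01 _).2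
            _ = ((Finset.univ.erase j).card : ℝ) := by simp
          have hcard : ((Finset.univ.erase j).card : ℝ) + 1 = r := by
            have := Finset.card_erase_add_one (Finset.mem_univ j)
            have h2 : (Finset.univ.erase j).card + 1 = r := by
              simpa using this
            exact_mod_cast h2
          linarith [(hg01 x).2]
        · have hgx : g x = 0 := Set.indicator_of_notMem hxA _
          have hsum : (∑ i, g (U i x)) ≤ r := by
            calc (∑ i, g (U i x)) ≤ ∑ _i : Fin r, (1 : ℝ) :=
              Finset.sum_le_sum fun i _ => (hg01 _).2
            _ = r := by simp
          linarith
    have hmono_ce : μ[F|B α] ≤ᵐ[μ] μ[χ|B α] :=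
      condExp_mono hFint hχint (Filter.Eventually.of_forall hbound)
    have hceF : μ[F|B α] =ᵐ[μ] (f + ∑ i, f ∘ U i) - fun _ => (r : ℝ) := by
      have h1 : μ[F|B α] =ᵐ[μ] μ[g + ∑ i, g ∘ U i|B α] - μ[fun _ => (r : ℝ)|B α] :=
        condExp_sub (hgint.add hsum_int) (integrable_const _) (B α)
      have h2 : μ[g + ∑ i, g ∘ U i|B α] =ᵐ[μ]
          μ[g|B α] + μ[∑ i, g ∘ U i|B α] := condExp_add hgint hsum_int (B α)
      have h3 : μ[∑ i, g ∘ U i|B α] =ᵐ[μ] ∑ i, μ[g ∘ U i|B α] :=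
        condExp_finsetSum (fun i _ => hcomp_int i) (B α)
      have h4 : (∑ i : Fin r, μ[g ∘ U i|B α]) =ᵐ[μ] ∑ i, f ∘ U i :=
        eventuallyEq_sum fun i _ =>
          (condexp_comp_mp hmle (hUmp i) (hUcomap i) hgint).symm
      have h5 : μ[fun _ => (r : ℝ)|B α] = fun _ => (r : ℝ) := condExp_const hmle _
      calc μ[F|B α] =ᵐ[μ] μ[g + ∑ i, g ∘ U i|B α] - μ[fun _ => (r : ℝ)|B α] := h1
      _ =ᵐ[μ] (f + ∑ i, f ∘ U i) - fun _ => (r : ℝ) := by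
        rw [h5]
        exact EventuallyEq.sub ((h2.trans (EventuallyEq.add
          (EventuallyEq.refl _ _) (h3.trans h4)))) (EventuallyEq.refl _ _)
    -- pointwise lower bound on A' ∩ K'
    have hkey : ∀ᵐ x ∂μ.restrict (A' ∩ K'), (1 / 2 : ℝ) ≤ (μ[χ|B α]) x := by
      rw [ae_restrict_iff' hs'0]
      filter_upwards [hmono_ce, hceF] with x h1 h2 hx
      have hfx : 1 - η ≤ f x := hx.1
      have hfU : ∀ i, 1 - η ≤ f (U i x) := by
        intro i
        have := Set.mem_iInter.mp hx.2 i
        exact this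
      have hsum : (↑r) * (1 - η) ≤ ∑ i, f (U i x) := by
        calc (↑r) * (1 - η) = ∑ _i : Fin r, (1 - η) := by simp [mul_comm]; ring
        _ ≤ ∑ i, f (U i x) := Finset.sum_le_sum fun i _ => hfU i
      have hFval : (μ[F|B α]) x = f x + (∑ i, f (U i x)) - r := by
        rw [h2]
        simp [Finset.sum_apply]
      have hηeq : ((r : ℝ) + 1) * η = 1 / 2 := by
        rw [hη]
        field_simp
      have : 1 / 2 ≤ (μ[F|B α]) x := by
        rw [hFval]
        nlinarith
      exact le_trans this h1
    -- integral chain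
    have hint1 : (1 / 2 : ℝ) * (μ (A' ∩ K')).toReal ≤
        ∫ x in A' ∩ K', (μ[χ|B α]) x ∂μ := by
      have := setIntegral_mono_ae_restrict (μ := μ) (s := A' ∩ K')
        ((integrable_const (1 / 2 : ℝ)).integrableOn)
        (integrable_condExp.integrableOn) hkey
      calc (1 / 2 : ℝ) * (μ (A' ∩ K')).toReal
          = ∫ _x in A' ∩ K', (1 / 2 : ℝ) ∂μ := by
            rw [setIntegral_const]; rw [smul_eq_mul]; simp only [measureReal_def]; ring
      _ ≤ _ := this
    have hint2 : ∫ x in A' ∩ K', (μ[χ|B α]) x ∂μ = ∫ x in A' ∩ K', χ x ∂μ :=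
      setIntegral_condExp hmle hχint hs'α
    have hint3 : ∫ x in A' ∩ K', χ x ∂μ = (μ ((A' ∩ K') ∩ (A ∩ K))).toReal := by
      rw [hχ_def, setIntegral_indicator hAKm, setIntegral_const, smul_eq_mul, mul_one, measureReal_def]
    have hint4 : (μ ((A' ∩ K') ∩ (A ∩ K))).toReal ≤ (μ (A ∩ K)).toReal :=
      ENNReal.toReal_mono (measure_ne_top μ _) (measure_mono Set.inter_subset_right)
    have hfinal : (1 / 2 : ℝ) * (μ (A' ∩ K')).toReal ≤ (μ (A ∩ K)).toReal := by
      calc (1 / 2 : ℝ) * (μ (A' ∩ K')).toReal ≤ ∫ x in A' ∩ K', (μ[χ|B α]) x ∂μ := hint1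
      _ = (μ ((A' ∩ K') ∩ (A ∩ K))).toReal := by rw [hint2, hint3]
      _ ≤ (μ (A ∩ K)).toReal := hint4
    have h2fin : (2 : ℝ≥0∞) * μ (A ∩ K) ≠ ⊤ :=
      ENNReal.mul_ne_top (by norm_num) (measure_ne_top μ _)
    rw [← ENNReal.toReal_le_toReal (measure_ne_top μ _) h2fin]
    rw [ENNReal.toReal_mul]
    simp only [ENNReal.toReal_ofNat]
    linarith
end

section
/- Let Λ be a lattice in ℤ^m and let p₁,…,p_r be integral polynomials that are jointly intersective on Λ. Then for every sublattice Λ' of Λ there exists l ∈ ℤ^m such that Λ' + l ⊆ Λ and p₁,…,p_r are jointly intersective on Λ' + l. -/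
noncomputable def evalZm {m : ℕ} (p : MvPolynomial (Fin m) ℚ) (n : Fin m → ℤ) : ℚ :=
  MvPolynomial.eval (fun i => (n i : ℚ)) p

/-- The integer value of an integral polynomial at an integer point. -/
noncomputable def zval {m : ℕ} (p : MvPolynomial (Fin m) ℚ) (n : Fin m → ℤ) : ℤ :=
  (evalZm p n).num

/-- A lattice in `ℤ^m`: a coset of a finite-index subgroup of `ℤ^m`. -/
def IsLattice {m : ℕ} (Λ : Set (Fin m → ℤ)) : Prop :=
  ∃ (H : AddSubgroup (Fin m → ℤ)) (l : Fin m → ℤ), H.FiniteIndex ∧ Λ = {x | x - l ∈ H}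

/-- A rational polynomial taking integer values on `Λ`. -/
def IsIntegralOn {m : ℕ} (p : MvPolynomial (Fin m) ℚ) (Λ : Set (Fin m → ℤ)) : Prop :=
  ∀ n ∈ Λ, ∃ z : ℤ, evalZm p n = (z : ℚ)

/-- `p₁, …, p_r` are jointly intersective on `Λ`: for every `k ∈ ℕ` there is `n ∈ Λ`
such that `k` divides every `pᵢ(n)`. -/
def JointlyIntersectiveOn {m r : ℕ} (p : Fin r → MvPolynomial (Fin m) ℚ)
    (Λ : Set (Fin m → ℤ)) : Prop :=
  ∀ k : ℕ, 0 < k → ∃ n ∈ Λ, ∀ i, ∃ z : ℤ, evalZm (p i) n = (k : ℚ) * z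

/-- If `p₁,…,p_r` are jointly intersective on a lattice `Λ`, then for any
sublattice `Λ'` of `Λ` there is `l` such that `Λ' + l ⊆ Λ` and `p₁,…,p_r` are jointly
intersective on `Λ' + l`. -/
theorem jointly_intersective_on_translated_sublattice {m r : ℕ}
    (p : Fin r → MvPolynomial (Fin m) ℚ) (Λ : Set (Fin m → ℤ)) (hΛ : IsLattice Λ)
    (hint : ∀ i, IsIntegralOn (p i) Λ) (hJI : JointlyIntersectiveOn p Λ)
    (Λ' : Set (Fin m → ℤ)) (hΛ' : IsLattice Λ') (hsub : Λ' ⊆ Λ) :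
    ∃ l : Fin m → ℤ, (fun x => x + l) '' Λ' ⊆ Λ ∧
      JointlyIntersectiveOn p ((fun x => x + l) '' Λ') := by
  obtain ⟨H, lΛ, hfin, hΛeq⟩ := hΛ
  obtain ⟨H', lam', hfin', hΛ'eq⟩ := hΛ'
  have hlam' : lam' ∈ Λ' := by rw [hΛ'eq]; simpa using H'.zero_mem
  have hH'H : ∀ h ∈ H', h ∈ H := by
    intro h hh
    have h1 : lam' + h ∈ Λ := hsub (by rw [hΛ'eq]; simpa using hh)
    have h2 : lam' ∈ Λ := hsub hlam'
    rw [hΛeq] at h1 h2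
    have := H.sub_mem h1 h2
    simpa using this
  have hchoice : ∀ k : ℕ, ∃ x ∈ Λ, ∀ i, ∃ z : ℤ,
      evalZm (p i) x = ((k.factorial : ℕ) : ℚ) * z :=
    fun k => hJI k.factorial k.factorial_pos
  choose n hnΛ hnz using hchoice
  haveI : H'.FiniteIndex := hfin'
  haveI : Finite ((Fin m → ℤ) ⧸ H') := H'.finite_quotient_of_finiteIndex
  obtain ⟨q, hq⟩ := Finite.exists_infinite_fiber
    (fun k : ℕ => (QuotientAddGroup.mk (n k) : (Fin m → ℤ) ⧸ H'))
  have hqS : (Set.Infinite {k : ℕ | (QuotientAddGroup.mk (n k) : (Fin m → ℤ) ⧸ H') = q}) := by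
    rw [← Set.infinite_coe_iff]; exact hq
  obtain ⟨k₀, hk₀, -⟩ := hqS.exists_gt 0
  refine ⟨n k₀ - lam', ?_, ?_⟩
  · rintro y ⟨x, hx, rfl⟩
    rw [hΛ'eq] at hx
    rw [hΛeq]
    have h1 : n k₀ - lΛ ∈ H := by have := hnΛ k₀; rw [hΛeq] at this; exact this
    have h2 : x - lam' ∈ H := hH'H _ hx
    have := H.add_mem h2 h1
    have heq : (x - lam') + (n k₀ - lΛ) = x + (n k₀ - lam') - lΛ := by abel
    rw [heq] at this
    exact this
  · intro k hk
    obtain ⟨K, hKq, hkK⟩ := hqS.exists_gt k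
    have hmem : n K - n k₀ ∈ H' := by
      have : (QuotientAddGroup.mk (n K) : (Fin m → ℤ) ⧸ H')
          = QuotientAddGroup.mk (n k₀) := by
        rw [hKq, hk₀]
      have h := (QuotientAddGroup.eq (s := H') (a := n K) (b := n k₀)).mp this
      have heq : -(n K) + n k₀ = -(n K - n k₀) := by abel
      rw [heq] at h
      simpa using H'.neg_mem h
    refine ⟨n K, ⟨n K - n k₀ + lam', ?_, by dsimp only; abel⟩, ?_⟩
    · rw [hΛ'eq]; simpa using hmem
    · intro i
      obtain ⟨z, hz⟩ := hnz K i
      have hdvd : k ∣ K.factorial := Nat.dvd_factorial hk (le_of_lt hkK)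
      obtain ⟨c, hc⟩ := hdvd
      refine ⟨(c : ℤ) * z, ?_⟩
      rw [hz, hc]
      push_cast
      ring
end

section
/- Let Λ be a lattice in ℤ^m and let p₁,…,p_r be integral polynomials that are jointly intersective on Λ. Then for every k ∈ ℕ there exists a sublattice Λ' ⊆ Λ such that p₁,…,p_r are jointly intersective on Λ' and k divides p_i(n) for all n ∈ Λ' and all i = 1,…,r. -/
lemma exists_int_sum {α : Type*} [DecidableEq α] (S : Finset α) (f : α → ℚ) (M : ℚ)
    (h : ∀ s ∈ S, ∃ z : ℤ, f s = M * z) : ∃ z : ℤ, ∑ s ∈ S, f s = M * z := by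
  classical
  have h' : ∀ s : α, ∃ z : ℤ, s ∈ S → f s = M * z := by
    intro s
    by_cases hs : s ∈ S
    · obtain ⟨z, hz⟩ := h s hs; exact ⟨z, fun _ => hz⟩
    · exact ⟨0, fun hs' => absurd hs' hs⟩
  choose g hg using h'
  refine ⟨∑ s ∈ S, g s, ?_⟩
  rw [Finset.sum_congr rfl (fun s hs => hg s hs), ← Finset.mul_sum]
  push_cast
  ring

lemma mon_dvd {m : ℕ} (K : ℕ) (a b : Fin m → ℤ) (hab : ∀ j, (K:ℤ) ∣ a j - b j)
    (d : Fin m →₀ ℕ) :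
    (K:ℤ) ∣ (∏ j, a j ^ d j) - ∏ j, b j ^ d j := by
  have h : ∀ j, ((a j : ZMod K)) = (b j : ZMod K) := by
    intro j
    have h0 : ((a j - b j : ℤ) : ZMod K) = 0 :=
      (ZMod.intCast_zmod_eq_zero_iff_dvd _ _).2 (hab j)
    push_cast at h0
    exact sub_eq_zero.mp h0
  rw [← ZMod.intCast_zmod_eq_zero_iff_dvd]
  push_cast
  rw [sub_eq_zero]
  exact Finset.prod_congr rfl (fun j _ => by rw [h j])

lemma key_lemma {m : ℕ} (p : MvPolynomial (Fin m) ℚ) (D : ℕ)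
    (hD : ∀ s ∈ p.support, ∃ z : ℤ, p.coeff s * D = (z : ℚ)) (M : ℕ)
    (a b : Fin m → ℤ) (hab : ∀ j, ((M * D : ℕ) : ℤ) ∣ a j - b j) :
    ∃ w : ℤ, (evalZm p a - evalZm p b) * D = (M : ℚ) * D * w := by
  classical
  unfold evalZm
  rw [MvPolynomial.eval_eq', MvPolynomial.eval_eq', ← Finset.sum_sub_distrib,
    Finset.sum_mul]
  have := exists_int_sum p.support
    (fun s => (p.coeff s * ∏ j, (a j : ℚ) ^ s j - p.coeff s * ∏ j, (b j : ℚ) ^ s j) * D)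
    ((M : ℚ) * D) ?_
  · exact this
  intro s hs
  obtain ⟨z, hz⟩ := hD s hs
  obtain ⟨w, hw⟩ := mon_dvd (M * D) a b hab s
  refine ⟨z * w, ?_⟩
  have hw' : (∏ j, (a j : ℚ) ^ s j) - ∏ j, (b j : ℚ) ^ s j = (M : ℚ) * D * w := by
    have := congrArg (fun x : ℤ => (x : ℚ)) hw
    push_cast at this
    simpa using this
  have hz' : p.coeff s * D = (z : ℚ) := hz
  push_cast
  linear_combination ((∏ j, (a j : ℚ) ^ s j) - ∏ j, (b j : ℚ) ^ s j) * hz' + (z : ℚ) * hw'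

/-- If `p₁,…,p_r` are jointly intersective on a lattice `Λ`, then for
every `k ∈ ℕ` there is a sublattice `Λ' ⊆ Λ` on which `p₁,…,p_r` are jointly
intersective, and such that `k` divides every `pᵢ(n)` for all `n ∈ Λ'`. -/
theorem jointly_intersective_on_divisible_sublattice {m r : ℕ}
    (p : Fin r → MvPolynomial (Fin m) ℚ) (Λ : Set (Fin m → ℤ)) (hΛ : IsLattice Λ)
    (hint : ∀ i, IsIntegralOn (p i) Λ) (hJI : JointlyIntersectiveOn p Λ)
    (k : ℕ) (hk : 0 < k) :
    ∃ Λ' : Set (Fin m → ℤ), IsLattice Λ' ∧ Λ' ⊆ Λ ∧ JointlyIntersectiveOn p Λ' ∧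
      ∀ n ∈ Λ', ∀ i, ∃ z : ℤ, evalZm (p i) n = (k : ℚ) * z := by
  classical
  obtain ⟨H, l, hHfi, hΛeq⟩ := hΛ
  set N := H.index with hNdef
  have hN : 0 < N := Nat.pos_of_ne_zero hHfi.index_ne_zero
  -- common denominator
  set D : ℕ := ∏ i : Fin r, ∏ s ∈ (p i).support, ((p i).coeff s).den with hDdef
  have hDpos : 0 < D := by
    apply Finset.prod_pos; intro i _
    apply Finset.prod_pos; intro s _
    exact (p i).coeff s |>.pos
  have hD : ∀ i, ∀ s ∈ (p i).support, ∃ z : ℤ, (p i).coeff s * D = (z : ℚ) := by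
    intro i s hs
    have hdvd : (((p i).coeff s).den : ℕ) ∣ D := by
      apply dvd_trans (Finset.dvd_prod_of_mem _ hs)
      exact Finset.dvd_prod_of_mem _ (Finset.mem_univ i)
    obtain ⟨t, ht⟩ := hdvd
    refine ⟨((p i).coeff s).num * t, ?_⟩
    have hq : ((p i).coeff s) * (((p i).coeff s).den : ℚ) = ((p i).coeff s).num := by
      exact_mod_cast Rat.mul_den_eq_num _
    rw [ht]
    push_cast
    rw [← mul_assoc, hq]
  set K : ℕ := k * D * N with hKdef
  have hKpos : 0 < K := by positivity
  haveI : NeZero K := ⟨hKpos.ne'⟩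
  -- witnesses
  have hseq : ∀ t : ℕ, ∃ n ∈ Λ, ∀ i, ∃ z : ℤ,
      evalZm (p i) n = ((K * (t + 1).factorial : ℕ) : ℚ) * z := by
    intro t
    exact hJI _ (by positivity)
  choose n hnΛ hndvd using hseq
  -- pigeonhole on residues mod K
  have hfin : Finite (Fin m → ZMod K) := inferInstance
  obtain ⟨c, hc⟩ := Finite.exists_infinite_fiber (fun t : ℕ => fun j => ((n t j : ZMod K)))
  set S : Set ℕ := (fun t : ℕ => fun j => ((n t j : ZMod K))) ⁻¹' {c} with hSdef
  have hS : S.Infinite := Set.infinite_coe_iff.mp hc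
  have hub : ∀ a : ℕ, ∃ t ∈ S, a ≤ t := by
    intro a
    by_contra hcon
    push_neg at hcon
    exact hS (Set.Finite.subset (Set.finite_Iio a) (fun t ht => hcon t ht))
  obtain ⟨t₀, ht₀S, -⟩ := hub 0
  set n₀ := n t₀ with hn₀def
  -- the subgroup K ∣ everything
  set f : (Fin m → ℤ) →+ (Fin m → ZMod K) :=
    { toFun := fun x j => ((x j : ZMod K))
      map_zero' := by ext j; simp
      map_add' := by intro x y; ext j; push_cast; simp } with hfdef
  set H' : AddSubgroup (Fin m → ℤ) := f.ker with hH'def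
  have hH'mem : ∀ y : Fin m → ℤ, y ∈ H' ↔ ∀ j, (K : ℤ) ∣ y j := by
    intro y
    rw [hH'def, AddMonoidHom.mem_ker, funext_iff]
    constructor
    · intro h j
      exact (ZMod.intCast_zmod_eq_zero_iff_dvd _ _).1 (h j)
    · intro h j
      exact (ZMod.intCast_zmod_eq_zero_iff_dvd _ _).2 (h j)
  have hH'fi : H'.FiniteIndex := AddSubgroup.finiteIndex_ker f
  -- H' ⊆ H
  have hH'H : ∀ y ∈ H', y ∈ H := by
    intro y hy
    rw [hH'mem] at hy
    choose w hw using hy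
    have hyw : y = (k * D) • (N • w) := by
      funext j
      have : ((k * D) • (N • w)) j = ((k * D * N : ℕ) : ℤ) * w j := by
        simp only [Pi.smul_apply, nsmul_eq_mul, Pi.mul_apply, Pi.natCast_apply]
        push_cast
        ring
      rw [this, ← hKdef]
      exact hw j
    rw [hyw]
    exact AddSubgroup.nsmul_mem H (AddSubgroup.nsmul_index_mem H w) _
  -- the sublattice
  refine ⟨{x | x - n₀ ∈ H'}, ⟨H', n₀, hH'fi, rfl⟩, ?_, ?_, ?_⟩
  · -- Λ' ⊆ Λ
    intro x hx
    have h1 : x - n₀ ∈ H := hH'H _ hx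
    have h2 : n₀ - l ∈ H := by
      have := hnΛ t₀
      rw [hΛeq] at this
      exact this
    rw [hΛeq]
    have := H.add_mem h1 h2
    rwa [sub_add_sub_cancel] at this
  · -- jointly intersective on Λ'
    intro k' hk'
    obtain ⟨t, htS, htge⟩ := hub k'
    refine ⟨n t, ?_, ?_⟩
    · show n t - n₀ ∈ H'
      rw [hH'mem]
      intro j
      have hres : ((n t j : ZMod K)) = ((n₀ j : ZMod K)) := by
        have h1 : (fun j => ((n t j : ZMod K))) = c := htS
        have h2 : (fun j => ((n₀ j : ZMod K))) = c := ht₀S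
        rw [funext_iff] at h1 h2
        rw [h1 j, h2 j]
      have := (ZMod.intCast_eq_intCast_iff _ _ _).1 hres
      exact (Int.ModEq.dvd this.symm)
    · intro i
      obtain ⟨z, hz⟩ := hndvd t i
      have hdvd : k' ∣ (t + 1).factorial :=
        Nat.dvd_factorial hk' (le_trans htge (Nat.le_succ t))
      obtain ⟨u, hu⟩ := hdvd
      refine ⟨(K : ℤ) * u * z, ?_⟩
      rw [hz, hu]
      push_cast
      ring
  · -- divisibility by k on Λ'
    intro x hx i
    have hxΛ : x ∈ Λ := by
      have h1 : x - n₀ ∈ H := hH'H _ hx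
      have h2 : n₀ - l ∈ H := by
        have := hnΛ t₀
        rw [hΛeq] at this
        exact this
      rw [hΛeq]
      have := H.add_mem h1 h2
      rwa [sub_add_sub_cancel] at this
    have hdiff : ∀ j, ((k * D : ℕ) : ℤ) ∣ x j - n₀ j := by
      intro j
      have hK : (K : ℤ) ∣ x j - n₀ j := by
        have := (hH'mem _).1 hx j
        simpa using this
      refine dvd_trans ?_ hK
      exact_mod_cast Int.natCast_dvd_natCast.2 (Dvd.intro N rfl)
    obtain ⟨w, hw⟩ := key_lemma (p i) D (hD i) k x n₀ hdiff
    obtain ⟨A, hA⟩ := hint i x hxΛ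
    obtain ⟨z, hz⟩ := hndvd t₀ i
    refine ⟨((D * N * (t₀ + 1).factorial : ℕ) : ℤ) * z + w, ?_⟩
    -- from hw: evalZm (p i) x - evalZm (p i) n₀ = k * w
    have hDne : (D : ℚ) ≠ 0 := by exact_mod_cast hDpos.ne'
    have hsub : evalZm (p i) x - evalZm (p i) n₀ = (k : ℚ) * w := by
      apply mul_right_cancel₀ hDne
      rw [hw]
      ring
    have hKcast : ((K * (t₀ + 1).factorial : ℕ) : ℚ) =
        (k : ℚ) * ((D * N * (t₀ + 1).factorial : ℕ) : ℚ) := by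
      rw [hKdef]; push_cast; ring
    push_cast
    push_cast at hsub hz hKcast
    linear_combination hsub + hz + (z : ℚ) * hKcast
end

section
/- Integral polynomials p₁,…,p_r of one variable are jointly intersective if and only if there exists an intersective polynomial p ∈ ℚ[n] such that p divides p_i in the ring ℚ[n] for every i = 1,…,r. -/
/-- Evaluation of a rational polynomial in one variable at an integer. -/
noncomputable def evalZ1 (p : Polynomial ℚ) (n : ℤ) : ℚ :=
  Polynomial.eval (n : ℚ) p

/-- An integral polynomial: a rational polynomial taking integer values on `ℤ`. -/
def IsIntegralPoly1 (p : Polynomial ℚ) : Prop :=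
  ∀ n : ℤ, ∃ z : ℤ, evalZ1 p n = (z : ℚ)

/-- The integer value of an integral polynomial at an integer. -/
noncomputable def zval1 (p : Polynomial ℚ) (n : ℤ) : ℤ :=
  (evalZ1 p n).num

/-- An intersective integral polynomial: for every `k ∈ ℕ` there is `n ∈ ℤ`
with `k ∣ p(n)`. -/
def Intersective1 (p : Polynomial ℚ) : Prop :=
  ∀ k : ℕ, 0 < k → ∃ n : ℤ, (k : ℤ) ∣ zval1 p n

/-- Jointly intersective: for every `k ∈ ℕ` there is `n ∈ ℤ` with `k ∣ pᵢ(n)` for all `i`. -/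
def JointlyIntersective1 {r : ℕ} (p : Fin r → Polynomial ℚ) : Prop :=
  ∀ k : ℕ, 0 < k → ∃ n : ℤ, ∀ i, (k : ℤ) ∣ zval1 (p i) n

/-- Denominator clearing: for every rational polynomial there is a nonzero integer `c`
such that `c * f(n)` is an integer for all integers `n`. -/
lemma clear_denoms (f : Polynomial ℚ) :
    ∃ c : ℤ, c ≠ 0 ∧ ∀ n : ℤ, ∃ z : ℤ, (c : ℚ) * f.eval (n : ℚ) = (z : ℚ) := by
  obtain ⟨b, hb⟩ := IsLocalization.integerNormalization_map_to_map (nonZeroDivisors ℤ) f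
  refine ⟨(b : ℤ), nonZeroDivisors.coe_ne_zero b, fun n => ?_⟩
  refine ⟨(IsLocalization.integerNormalization (nonZeroDivisors ℤ) f).eval n, ?_⟩
  have := congrArg (Polynomial.eval (n : ℚ)) hb
  rw [Polynomial.eval_smul] at this
  have h2 : ((IsLocalization.integerNormalization (nonZeroDivisors ℤ) f).map
      (algebraMap ℤ ℚ)).eval ((n : ℤ) : ℚ)
      = (((IsLocalization.integerNormalization (nonZeroDivisors ℤ) f).eval n : ℤ) : ℚ) := by
    have := Polynomial.eval_intCast_map (algebraMap ℤ ℚ)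
      (IsLocalization.integerNormalization (nonZeroDivisors ℤ) f) n
    simp only [eq_intCast, Int.cast_natCast] at this ⊢; exact this
  rw [h2] at this
  rw [this, zsmul_eq_mul]

/-- The integer value of an integral polynomial is characterized by its rational value. -/
lemma zval1_spec {p : Polynomial ℚ} (hp : IsIntegralPoly1 p) (n : ℤ) :
    evalZ1 p n = ((zval1 p n : ℤ) : ℚ) := by
  obtain ⟨z, hz⟩ := hp n
  rw [zval1, hz, Rat.num_intCast]

/-- Integral polynomials `p₁,…,p_r` of one variable are jointly
intersective if and only if they are all multiples (in `ℚ[n]`) of a single intersective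
polynomial. -/
theorem jointly_intersective_iff_common_intersective_divisor {r : ℕ}
    (p : Fin r → Polynomial ℚ) (hint : ∀ i, IsIntegralPoly1 (p i)) :
    JointlyIntersective1 p ↔
      ∃ q : Polynomial ℚ, IsIntegralPoly1 q ∧ Intersective1 q ∧ ∀ i, q ∣ p i := by
  constructor
  · -- forward direction
    intro hJ
    set I : Ideal (Polynomial ℚ) := Ideal.span (Set.range p) with hI
    haveI hprin : I.IsPrincipal := IsPrincipalIdealRing.principal I
    set g : Polynomial ℚ := Submodule.IsPrincipal.generator I with hgdef
    have hgmem : g ∈ I := Submodule.IsPrincipal.generator_mem I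
    have hgdvd : ∀ i, g ∣ p i := fun i =>
      (Submodule.IsPrincipal.mem_iff_generator_dvd I).mp (Ideal.subset_span ⟨i, rfl⟩)
    obtain ⟨a, ha⟩ := Ideal.mem_span_range_iff_exists_fun.mp hgmem
    obtain ⟨c, hc0, hcg⟩ := clear_denoms g
    refine ⟨Polynomial.C (c : ℚ) * g, ?_, ?_, ?_⟩
    · -- integral
      intro n
      obtain ⟨z, hz⟩ := hcg n
      exact ⟨z, by simpa [evalZ1] using hz⟩
    · -- intersective
      intro k hk
      choose d hd0 hdval using fun i => clear_denoms (a i)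
      set M : ℕ := ∏ i, (d i).natAbs with hMdef
      have hM0 : 0 < M := Finset.prod_pos fun i _ => Int.natAbs_pos.mpr (hd0 i)
      have hdM : ∀ i, d i ∣ (M : ℤ) := by
        intro i
        have h1 : d i ∣ ((d i).natAbs : ℤ) := Int.dvd_natAbs.mpr dvd_rfl
        have h2 : ((d i).natAbs : ℤ) ∣ (M : ℤ) := by
          rw [hMdef]
          push_cast
          exact Finset.dvd_prod_of_mem _ (Finset.mem_univ i)
        exact h1.trans h2
      obtain ⟨n, hn⟩ := hJ (k * M) (Nat.mul_pos hk hM0)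
      refine ⟨n, ?_⟩
      obtain ⟨z, hz⟩ := hcg n
      have hzval : zval1 (Polynomial.C (c : ℚ) * g) n = z := by
        rw [zval1]
        have : evalZ1 (Polynomial.C (c : ℚ) * g) n = (z : ℚ) := by simpa [evalZ1] using hz
        rw [this, Rat.num_intCast]
      rw [hzval]
      -- per-index data
      choose zz hzz using fun i => hdval i n
      choose e he using fun i => hdM i
      choose t ht using fun i => hn i
      -- rational identity
      have hgev : g.eval (n : ℚ) = ∑ i, (a i).eval (n : ℚ) * (p i).eval (n : ℚ) := by
        conv_lhs => rw [← ha]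
        simp [Polynomial.eval_finset_sum]
      have hterm : ∀ i, (M : ℚ) * ((a i).eval (n : ℚ) * (p i).eval (n : ℚ))
          = ((k : ℚ) * M) * ((e i * zz i * t i : ℤ) : ℚ) := by
        intro i
        have hpv : (p i).eval (n : ℚ) = ((zval1 (p i) n : ℤ) : ℚ) := zval1_spec (hint i) n
        have hMa : (M : ℚ) * (a i).eval (n : ℚ) = ((e i * zz i : ℤ) : ℚ) := by
          have hM : (M : ℚ) = ((d i : ℚ)) * ((e i : ℚ)) := by exact_mod_cast he i
          calc (M : ℚ) * (a i).eval (n : ℚ)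
              = ((e i : ℚ)) * ((d i : ℚ) * (a i).eval (n : ℚ)) := by rw [hM]; ring
            _ = ((e i * zz i : ℤ) : ℚ) := by rw [hzz i]; push_cast; ring
        calc (M : ℚ) * ((a i).eval (n : ℚ) * (p i).eval (n : ℚ))
            = ((M : ℚ) * (a i).eval (n : ℚ)) * (p i).eval (n : ℚ) := by ring
          _ = ((e i * zz i : ℤ) : ℚ) * ((zval1 (p i) n : ℤ) : ℚ) := by rw [hMa, hpv]
          _ = ((k : ℚ) * M) * ((e i * zz i * t i : ℤ) : ℚ) := by
              rw [ht i]; push_cast; ring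
      have hmain : (M : ℚ) * (z : ℚ)
          = ((k : ℚ) * M) * ((c * ∑ i, e i * zz i * t i : ℤ) : ℚ) := by
        have hsum : (M : ℚ) * g.eval (n : ℚ)
            = ∑ i, (M : ℚ) * ((a i).eval (n : ℚ) * (p i).eval (n : ℚ)) := by
          rw [hgev, Finset.mul_sum]
        calc (M : ℚ) * (z : ℚ) = (M : ℚ) * ((c : ℚ) * g.eval (n : ℚ)) := by rw [hz]
          _ = (c : ℚ) * ((M : ℚ) * g.eval (n : ℚ)) := by ring
          _ = (c : ℚ) * ∑ i, (M : ℚ) * ((a i).eval (n : ℚ) * (p i).eval (n : ℚ)) := by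
              rw [hsum]
          _ = (c : ℚ) * ∑ i, ((k : ℚ) * M) * ((e i * zz i * t i : ℤ) : ℚ) := by
              rw [Finset.sum_congr rfl fun i _ => hterm i]
          _ = ((k : ℚ) * M) * ((c * ∑ i, e i * zz i * t i : ℤ) : ℚ) := by
              rw [← Finset.mul_sum]; push_cast; ring
      have hMq : (M : ℚ) ≠ 0 := by exact_mod_cast hM0.ne'
      have hzq : (z : ℚ) = ((k * (c * ∑ i, e i * zz i * t i) : ℤ) : ℚ) := by
        have := mul_left_cancel₀ hMq (by rw [hmain]; push_cast; ring :
          (M : ℚ) * (z : ℚ) = (M : ℚ) * ((k * (c * ∑ i, e i * zz i * t i) : ℤ) : ℚ))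
        exact this
      have hzz' : z = k * (c * ∑ i, e i * zz i * t i) := by exact_mod_cast hzq
      exact ⟨_, hzz'⟩
    · -- divides
      intro i
      obtain ⟨h, hh⟩ := hgdvd i
      have hcq : (c : ℚ) ≠ 0 := by exact_mod_cast hc0
      refine ⟨Polynomial.C ((c : ℚ))⁻¹ * h, ?_⟩
      have hu : Polynomial.C (c : ℚ) * Polynomial.C ((c : ℚ))⁻¹ = 1 := by
        rw [← Polynomial.C_mul, mul_inv_cancel₀ hcq, Polynomial.C_1]
      rw [hh, mul_mul_mul_comm, hu, one_mul]
  · -- reverse direction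
    rintro ⟨q, hqint, hqI, hqdvd⟩
    intro k hk
    choose h hh using hqdvd
    choose d hd0 hdval using fun i => clear_denoms (h i)
    set M : ℕ := ∏ i, (d i).natAbs with hMdef
    have hM0 : 0 < M := Finset.prod_pos fun i _ => Int.natAbs_pos.mpr (hd0 i)
    have hdM : ∀ i, d i ∣ (M : ℤ) := by
      intro i
      have h1 : d i ∣ ((d i).natAbs : ℤ) := Int.dvd_natAbs.mpr dvd_rfl
      have h2 : ((d i).natAbs : ℤ) ∣ (M : ℤ) := by
        rw [hMdef]; push_cast
        exact Finset.dvd_prod_of_mem _ (Finset.mem_univ i)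
      exact h1.trans h2
    obtain ⟨n, hn⟩ := hqI (k * M) (Nat.mul_pos hk hM0)
    refine ⟨n, fun i => ?_⟩
    obtain ⟨s, hs⟩ := hn
    obtain ⟨zz, hzz⟩ := hdval i n
    obtain ⟨e, he⟩ := hdM i
    have hqv : q.eval (n : ℚ) = ((zval1 q n : ℤ) : ℚ) := zval1_spec hqint n
    have hpv : (p i).eval (n : ℚ) = ((zval1 (p i) n : ℤ) : ℚ) := zval1_spec (hint i) n
    have hmain : (M : ℚ) * ((zval1 (p i) n : ℤ) : ℚ)
        = ((k : ℚ) * M) * ((s * (e * zz) : ℤ) : ℚ) := by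
      calc (M : ℚ) * ((zval1 (p i) n : ℤ) : ℚ)
          = (M : ℚ) * (q.eval (n : ℚ) * (h i).eval (n : ℚ)) := by
            rw [← hpv]
            congr 1
            rw [show (p i).eval (n : ℚ) = (q * h i).eval (n : ℚ) by rw [← hh i],
              Polynomial.eval_mul]
        _ = q.eval (n : ℚ) * ((M : ℚ) * (h i).eval (n : ℚ)) := by ring
        _ = ((zval1 q n : ℤ) : ℚ) * (((e : ℚ)) * ((d i : ℚ) * (h i).eval (n : ℚ))) := by
            have hMQ : (M : ℚ) = ((d i : ℚ)) * ((e : ℚ)) := by exact_mod_cast he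
            rw [hqv, hMQ]; ring
        _ = ((k : ℚ) * M) * ((s * (e * zz) : ℤ) : ℚ) := by
            rw [hzz, hs]; push_cast; ring
    have hMq : (M : ℚ) ≠ 0 := by exact_mod_cast hM0.ne'
    have hfin : ((zval1 (p i) n : ℤ) : ℚ) = ((k * (s * (e * zz)) : ℤ) : ℚ) := by
      apply mul_left_cancel₀ hMq
      rw [hmain]; push_cast; ring
    have : zval1 (p i) n = k * (s * (e * zz)) := by exact_mod_cast hfin
    exact ⟨_, this⟩
end
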